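/- After SignHunter completes all rounds at granularity levels h = 0,1,...,⌈log₂ n⌉ (flipping, at level h, each of the 2^h contiguous blocks of length ⌈n/2^h⌉ and retaining/reverting by the greedy rule), every coordinate has been flipped in isolation at the finest level; consequently, if all g_i ≠ 0, the final sign vector equals sgn(g), and the total number of oracle evaluations is at most 2^{⌈log₂ n⌉ + 1}. -/

import Mathlib

/-- Flip the coordinates of `s` lying in the block `B`. -/
def blockFlip {n : ℕ} (B : Finset (Fin n)) (s : Fin n → ℝ) : Fin n → ℝ :=
  fun i => if i ∈ B then -s i else s i

/-- One greedy step: flip the block, retain iff the oracle value does not decrease. -/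
noncomputable def greedyStep {n : ℕ} (g : Fin n → ℝ) (s : Fin n → ℝ) (B : Finset (Fin n)) : Fin n → ℝ :=
  let s' := blockFlip B s
  if (∑ j, s j * g j) ≤ (∑ j, s' j * g j) then s' else s

/-- The j-th contiguous block of length ⌈n/2^h⌉ at granularity level h. -/
def levelBlock (n h j : ℕ) : Finset (Fin n) :=
  Finset.univ.filter (fun i : Fin n =>
    j * ((n + 2 ^ h - 1) / 2 ^ h) ≤ (i : ℕ) ∧ (i : ℕ) < (j + 1) * ((n + 2 ^ h - 1) / 2 ^ h))

/-- The full SignHunter schedule: at each level h = 0,…,⌈log₂ n⌉ flip each of the 2^h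
blocks in turn. -/
def signHunterSchedule (n : ℕ) : List (Finset (Fin n)) :=
  (List.range (Nat.clog 2 n + 1)).flatMap
    (fun h => (List.range (2 ^ h)).map (fun j => levelBlock n h j))

lemma greedyStep_sign {n : ℕ} (g s : Fin n → ℝ) (B : Finset (Fin n))
    (hs : ∀ i, s i = 1 ∨ s i = -1) : ∀ i, greedyStep g s B i = 1 ∨ greedyStep g s B i = -1 := by
  intro i
  unfold greedyStep blockFlip
  rcases hs i with h | h <;> by_cases hb : i ∈ B <;> split_ifs <;> simp [h, hb]

lemma foldl_sign {n : ℕ} (g : Fin n → ℝ) (l : List (Finset (Fin n))) :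
    ∀ s : Fin n → ℝ, (∀ i, s i = 1 ∨ s i = -1) →
      ∀ i, (l.foldl (greedyStep g) s) i = 1 ∨ (l.foldl (greedyStep g) s) i = -1 := by
  induction l with
  | nil => intro s hs; exact hs
  | cons B l ih => intro s hs; exact ih _ (greedyStep_sign g s B hs)

lemma greedyStep_not_mem {n : ℕ} (g s : Fin n → ℝ) (B : Finset (Fin n)) (i : Fin n)
    (hi : i ∉ B) : greedyStep g s B i = s i := by
  unfold greedyStep blockFlip
  split_ifs <;> simp [hi]

lemma greedyStep_singleton {n : ℕ} (g s : Fin n → ℝ) (B : Finset (Fin n)) (i0 : Fin n)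
    (hB : ∀ i, i ∈ B ↔ i = i0) (hs : ∀ i, s i = 1 ∨ s i = -1) (hg : g i0 ≠ 0) :
    greedyStep g s B i0 = if 0 < g i0 then 1 else -1 := by
  have hflip : ∀ j, blockFlip B s j = if j = i0 then -s j else s j := by
    intro j
    unfold blockFlip
    by_cases hj : j = i0
    · simp [hj, (hB i0).2 rfl]
    · have hnb : j ∉ B := fun h => hj ((hB j).1 h)
      simp [hj, hnb]
  have hsum : (∑ j, blockFlip B s j * g j)
      = (∑ j, s j * g j) + ∑ j, (if j = i0 then (-2) * (s i0 * g i0) else 0) := by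
    rw [← Finset.sum_add_distrib]
    apply Finset.sum_congr rfl
    intro j _
    rw [hflip j]
    by_cases hj : j = i0
    · subst hj; simp; ring
    · simp [hj]
  have hsum2 : (∑ j : Fin n, (if j = i0 then (-2 : ℝ) * (s i0 * g i0) else 0))
      = -2 * (s i0 * g i0) := by simp
  have hne : s i0 * g i0 ≠ 0 := by
    rcases hs i0 with h1 | h1 <;> simp [h1] <;> exact hg
  have key : greedyStep g s B i0 * g i0 > 0 := by
    unfold greedyStep
    split_ifs with h
    · rw [hsum, hsum2] at h
      have hle : s i0 * g i0 ≤ 0 := by linarith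
      rw [hflip i0, if_pos rfl]
      rcases lt_or_eq_of_le hle with h2 | h2
      · nlinarith
      · exact absurd h2 hne
    · rw [hsum, hsum2] at h
      push_neg at h
      nlinarith
  rcases greedyStep_sign g s B hs i0 with h | h <;> rw [h] at key ⊢ <;>
    by_cases h2 : 0 < g i0 <;> simp [h2] <;> nlinarith

lemma mem_levelBlock {n H j : ℕ} (hL : (n + 2 ^ H - 1) / 2 ^ H = 1) (i : Fin n) :
    i ∈ levelBlock n H j ↔ (i : ℕ) = j := by
  simp [levelBlock, hL]
  omega

lemma last_fold {n H : ℕ} (g : Fin n → ℝ) (hg : ∀ i, g i ≠ 0)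
    (hL : (n + 2 ^ H - 1) / 2 ^ H = 1) :
    ∀ m (s : Fin n → ℝ), (∀ i, s i = 1 ∨ s i = -1) →
      ∀ i : Fin n,
        (List.foldl (greedyStep g) s ((List.range m).map (fun j => levelBlock n H j))) i
          = if (i : ℕ) < m then (if 0 < g i then 1 else -1) else s i := by
  intro m
  induction m with
  | zero => intro s hs i; simp
  | succ m ih =>
    intro s hs i
    rw [List.range_succ, List.map_append, List.foldl_append]
    set t := List.foldl (greedyStep g) s ((List.range m).map (fun j => levelBlock n H j)) with ht
    have htsign : ∀ i, t i = 1 ∨ t i = -1 := foldl_sign g _ s hs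
    simp only [List.map_cons, List.map_nil, List.foldl_cons, List.foldl_nil]
    by_cases hi : (i : ℕ) = m
    · rw [greedyStep_singleton g t _ i (fun j => by rw [mem_levelBlock hL, Fin.ext_iff, hi])
        htsign (hg i)]
      simp [hi]
    · have hnm : i ∉ levelBlock n H m := by rw [mem_levelBlock hL]; exact hi
      rw [greedyStep_not_mem g t _ i hnm, ht, ih s hs i]
      by_cases h2 : (i : ℕ) < m
      · rw [if_pos h2, if_pos (show (i : ℕ) < m + 1 by omega)]
      · rw [if_neg h2, if_neg (show ¬((i : ℕ) < m + 1) by omega)]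

lemma geom_sum_aux : ∀ k : ℕ, ((List.range k).map (fun h => 2 ^ h)).sum = 2 ^ k - 1 := by
  intro k
  induction k with
  | zero => simp
  | succ k ih =>
    rw [List.range_succ, List.map_append, List.sum_append, ih]
    have : 1 ≤ 2 ^ k := Nat.one_le_two_pow
    simp [pow_succ]
    omega

/-- after completing all granularity levels, SignHunter's final sign vector
equals sgn(g) (all gᵢ ≠ 0), using at most 2^{⌈log₂ n⌉ + 1} oracle evaluations. -/
theorem signhunter_recovers_sign (n : ℕ) (hn : 1 ≤ n) (g : Fin n → ℝ) (hg : ∀ i, g i ≠ 0)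
    (s0 : Fin n → ℝ) (hs0 : ∀ i, s0 i = 1 ∨ s0 i = -1) :
    (signHunterSchedule n).foldl (greedyStep g) s0
      = (fun i => if 0 < g i then (1 : ℝ) else -1) ∧
    (signHunterSchedule n).length ≤ 2 ^ (Nat.clog 2 n + 1) := by
  set H := Nat.clog 2 n with hH
  have hpow : n ≤ 2 ^ H := Nat.le_pow_clog (by norm_num) n
  have hp : 0 < 2 ^ H := Nat.pow_pos (by norm_num)
  have hL : (n + 2 ^ H - 1) / 2 ^ H = 1 := by
    have h3 : n + 2 ^ H - 1 = (n - 1) + 2 ^ H := by omega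
    rw [h3, Nat.add_div_right _ hp, Nat.div_eq_of_lt (by omega)]
  constructor
  · have hsplit : signHunterSchedule n
        = ((List.range H).flatMap
            (fun h => (List.range (2 ^ h)).map (fun j => levelBlock n h j)))
          ++ ((List.range (2 ^ H)).map (fun j => levelBlock n H j)) := by
      unfold signHunterSchedule
      rw [← hH, List.range_succ, List.flatMap_append]
      simp
    rw [hsplit, List.foldl_append]
    set t := List.foldl (greedyStep g) s0
      ((List.range H).flatMap (fun h => (List.range (2 ^ h)).map (fun j => levelBlock n h j)))
    have htsign : ∀ i, t i = 1 ∨ t i = -1 := foldl_sign g _ s0 hs0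
    funext i
    rw [last_fold g hg hL (2 ^ H) t htsign i, if_pos (lt_of_lt_of_le i.isLt hpow)]
  · unfold signHunterSchedule
    rw [List.length_flatMap]
    have : (List.map (fun h => ((List.range (2 ^ h)).map (fun j => levelBlock n h j)).length)
        (List.range (H + 1))) = (List.range (H + 1)).map (fun h => 2 ^ h) := by
      apply List.map_congr_left
      intro h _
      simp
    rw [← hH, this]
    rw [geom_sum_aux]
    omega
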